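/- The direct product of two nontrivial connected graphs G and H is connected if and only if at least one of G and H is not bipartite. -/

import Mathlib

open SimpleGraph

universe u v

variable {α : Type u} {β : Type v}

/-- Direct (tensor) product of two simple graphs. -/
def SimpleGraph.tensorProd (G : SimpleGraph α) (H : SimpleGraph β) :
    SimpleGraph (α × β) where
  Adj x y := G.Adj x.1 y.1 ∧ H.Adj x.2 y.2
  symm := ⟨fun x y h => ⟨h.1.symm, h.2.symm⟩⟩
  loopless := ⟨fun x h => G.loopless.1 x.1 h.1⟩

/-- Direct (tensor) product of a family of simple graphs. -/
def SimpleGraph.piTensorProd {ι : Type*} {V : ι → Type*}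
    (G : ∀ i, SimpleGraph (V i)) : SimpleGraph (∀ i, V i) where
  Adj f g := f ≠ g ∧ ∀ i, (G i).Adj (f i) (g i)
  symm := ⟨fun f g h => ⟨h.1.symm, fun i => (h.2 i).symm⟩⟩
  loopless := ⟨fun f h => h.1 rfl⟩

/-- `S` is a vertex cut of `G`: deleting `S` leaves a disconnected graph. -/
def SimpleGraph.IsVertexCut (G : SimpleGraph α) (S : Set α) : Prop :=
  ¬ (G.induce Sᶜ).Connected

/-- Vertex connectivity: minimum size of a set `S` such that `G - S` is
disconnected or has at most one vertex. -/
noncomputable def SimpleGraph.vConn (G : SimpleGraph α) : ℕ :=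
  sInf {n | ∃ S : Set α, S.ncard = n ∧
    (G.IsVertexCut S ∨ Nat.card α ≤ n + 1)}

/-- Minimum degree (via neighbor set cardinalities). -/
noncomputable def SimpleGraph.minDeg (G : SimpleGraph α) : ℕ :=
  sInf {d | ∃ v, (G.neighborSet v).ncard = d}

/-- A minimum vertex cut. -/
def SimpleGraph.IsMinVertexCut (G : SimpleGraph α) (S : Set α) : Prop :=
  G.IsVertexCut S ∧ S.ncard = G.vConn

/-- `G` is super connected: every minimum vertex cut is the neighborhood of a
vertex of minimum degree. -/
def SimpleGraph.SuperConnected (G : SimpleGraph α) : Prop :=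
  ∀ S : Set α, G.IsMinVertexCut S →
    ∃ v, (G.neighborSet v).ncard = G.minDeg ∧ S = G.neighborSet v

/-- `(X, Y)` is a bipartition of `G`. -/
def SimpleGraph.IsBipartition (G : SimpleGraph α) (X Y : Set α) : Prop :=
  Disjoint X Y ∧ X ∪ Y = Set.univ ∧
    ∀ u v, G.Adj u v → (u ∈ X ∧ v ∈ Y) ∨ (u ∈ Y ∧ v ∈ X)

/-- The graph `G̃ₙ`: vertex set `α × ZMod n`, with for each `i` a copy `Hᵢ`
of `G` on `(Xᵢ, Yᵢ)` and a copy `Hᵢ'` of `G` on `(Xᵢ₊₁, Yᵢ)`. -/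
def tildeG (G : SimpleGraph α) (X Y : Set α) (n : ℕ) :
    SimpleGraph (α × ZMod n) where
  Adj a b := G.Adj a.1 b.1 ∧
    ((a.1 ∈ X ∧ b.1 ∈ Y ∧ (a.2 = b.2 ∨ a.2 = b.2 + 1)) ∨
     (a.1 ∈ Y ∧ b.1 ∈ X ∧ (b.2 = a.2 ∨ b.2 = a.2 + 1)))
  symm := ⟨fun a b h => ⟨h.1.symm, by tauto⟩⟩
  loopless := ⟨fun a h => G.loopless.1 a.1 h.1⟩
private lemma exists_neighbor {G : SimpleGraph α} (hc : G.Connected)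
    (he : G.edgeSet.Nonempty) (v : α) : ∃ w, G.Adj v w := by
  obtain ⟨e, he⟩ := he
  induction e using Sym2.ind with
  | _ a b =>
    rw [SimpleGraph.mem_edgeSet] at he
    obtain ⟨p⟩ := hc.preconnected v a
    cases p with
    | nil => exact ⟨b, he⟩
    | cons h _ => exact ⟨_, h⟩

private lemma walk_add_even {G : SimpleGraph α} (hnb : ∀ v, ∃ w, G.Adj v w)
    {u u' : α} (p : G.Walk u u') (k : ℕ) :
    ∃ q : G.Walk u u', q.length = p.length + 2 * k := by
  induction k with
  | zero => exact ⟨p, by omega⟩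
  | succ k ih =>
    obtain ⟨q, hq⟩ := ih
    obtain ⟨w, hw⟩ := hnb u'
    refine ⟨q.append (Walk.cons hw (Walk.cons hw.symm Walk.nil)), ?_⟩
    simp [Walk.length_append, hq]; omega

private lemma exists_odd_closed_walk {G : SimpleGraph α} (hc : G.Connected)
    (hG : ¬ G.Colorable 2) : ∃ (w : α) (c : G.Walk w w), Odd c.length := by
  by_contra h
  push_neg at h
  apply hG
  obtain ⟨r⟩ := hc.nonempty
  have key : ∀ u (p q : G.Walk r u), p.length % 2 = q.length % 2 := by
    intro u p q
    have h2 := h r (p.append q.reverse)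
    rw [Nat.odd_iff] at h2
    rw [Walk.length_append, Walk.length_reverse] at h2
    omega
  refine ⟨SimpleGraph.Coloring.mk
    (fun u => ⟨((hc.preconnected r u).some.length) % 2, by omega⟩) ?_⟩
  intro u v huv hcol
  have h1 := key v ((hc.preconnected r u).some.concat huv) (hc.preconnected r v).some
  rw [Walk.length_concat] at h1
  have h2 : ((hc.preconnected r u).some.length) % 2
      = ((hc.preconnected r v).some.length) % 2 := congrArg Fin.val hcol
  omega

private lemma all_large_walks {G : SimpleGraph α} (hc : G.Connected)
    (he : G.edgeSet.Nonempty) (hG : ¬ G.Colorable 2) (u u' : α) :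
    ∃ N, ∀ n ≥ N, ∃ p : G.Walk u u', p.length = n := by
  obtain ⟨w, c, hodd⟩ := exists_odd_closed_walk hc hG
  obtain ⟨p1⟩ := hc.preconnected u w
  obtain ⟨p2⟩ := hc.preconnected w u'
  have hnb := exists_neighbor hc he
  refine ⟨p1.length + p2.length + c.length, fun n hn => ?_⟩
  obtain ⟨t, ht⟩ := hodd
  rcases Nat.even_or_odd (n - (p1.length + p2.length)) with hev | hod
  · obtain ⟨s, hs⟩ := hev
    obtain ⟨k, hk⟩ : ∃ k, n = (p1.append p2).length + 2 * k :=
      ⟨s, by rw [Walk.length_append]; omega⟩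
    obtain ⟨q, hq⟩ := walk_add_even hnb (p1.append p2) k
    exact ⟨q, by omega⟩
  · obtain ⟨s, hs⟩ := hod
    obtain ⟨k, hk⟩ : ∃ k, n = (p1.append (c.append p2)).length + 2 * k :=
      ⟨(s - t), by rw [Walk.length_append, Walk.length_append]; omega⟩
    obtain ⟨q, hq⟩ := walk_add_even hnb (p1.append (c.append p2)) k
    exact ⟨q, by omega⟩

private lemma zip_reachable {G : SimpleGraph α} {H : SimpleGraph β} :
    ∀ {u u' : α} {v v' : β} (p : G.Walk u u') (q : H.Walk v v'),
    p.length = q.length → (G.tensorProd H).Reachable (u, v) (u', v')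
  | _, _, _, _, Walk.nil, Walk.nil, _ => Reachable.refl _
  | _, _, _, _, Walk.cons h p, Walk.cons h' q, hl => by
      refine (SimpleGraph.Adj.reachable ?_).trans (zip_reachable p q (by simpa using hl))
      exact ⟨h, h'⟩
  | _, _, _, _, Walk.nil, Walk.cons _ _, hl => by simp at hl
  | _, _, _, _, Walk.cons _ _, Walk.nil, hl => by simp at hl

private lemma tensor_connected_of_left {G : SimpleGraph α} {H : SimpleGraph β}
    (hGc : G.Connected) (hHc : H.Connected) (hGe : G.edgeSet.Nonempty)
    (hHe : H.edgeSet.Nonempty) (hG : ¬ G.Colorable 2) :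
    (G.tensorProd H).Connected := by
  have hne : Nonempty (α × β) := ⟨(hGc.nonempty.some, hHc.nonempty.some)⟩
  rw [connected_iff]
  refine ⟨fun x y => ?_, hne⟩
  obtain ⟨u, v⟩ := x; obtain ⟨u', v'⟩ := y
  obtain ⟨N, hN⟩ := all_large_walks hGc hGe hG u u'
  obtain ⟨q0⟩ := hHc.preconnected v v'
  obtain ⟨q, hq⟩ := walk_add_even (exists_neighbor hHc hHe) q0 N
  obtain ⟨p, hp⟩ := hN (q0.length + 2 * N) (by omega)
  exact zip_reachable p q (by omega)

private def tensorSwapIso (G : SimpleGraph α) (H : SimpleGraph β) :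
    (G.tensorProd H) ≃g (H.tensorProd G) where
  toEquiv := Equiv.prodComm α β
  map_rel_iff' := by
    intro a b
    constructor
    · exact fun h => ⟨h.2, h.1⟩
    · exact fun h => ⟨h.2, h.1⟩

/-- The direct product of two nontrivial connected graphs is connected iff
at least one factor is not bipartite. -/
theorem stmt_0 (G : SimpleGraph α) (H : SimpleGraph β)
    (hGc : G.Connected) (hHc : H.Connected)
    (hGe : G.edgeSet.Nonempty) (hHe : H.edgeSet.Nonempty) :
    (G.tensorProd H).Connected ↔ (¬ G.Colorable 2 ∨ ¬ H.Colorable 2) := by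
  constructor
  · intro hcon
    by_contra hno
    push_neg at hno
    obtain ⟨hG2, hH2⟩ := hno
    obtain ⟨f⟩ := hG2
    obtain ⟨g⟩ := hH2
    set φ : α × β → ZMod 2 := fun x => ((f x.1).val : ZMod 2) + ((g x.2).val : ZMod 2)
      with hφ
    have step : ∀ {x y : α × β}, (G.tensorProd H).Adj x y → φ x = φ y := by
      intro x y hxy
      obtain ⟨h1, h2⟩ := hxy
      have hf : ((f y.1).val : ZMod 2) = ((f x.1).val : ZMod 2) + 1 := by
        have := f.valid h1
        revert this
        generalize f x.1 = a; generalize f y.1 = b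
        revert a b; decide
      have hg : ((g y.2).val : ZMod 2) = ((g x.2).val : ZMod 2) + 1 := by
        have := g.valid h2
        revert this
        generalize g x.2 = a; generalize g y.2 = b
        revert a b; decide
      simp only [hφ, hf, hg]
      ring_nf
      rw [show (2 : ZMod 2) = 0 from rfl]
      ring
    have inv : ∀ {x y : α × β}, (G.tensorProd H).Reachable x y → φ x = φ y := by
      intro x y hr
      obtain ⟨p⟩ := hr
      induction p with
      | nil => rfl
      | cons h p ih => exact (step h).trans ih
    obtain ⟨e, he⟩ := hGe
    induction e using Sym2.ind with
    | _ a b =>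
      rw [SimpleGraph.mem_edgeSet] at he
      obtain ⟨v0⟩ := hHc.nonempty
      have h1 := inv (hcon.preconnected (a, v0) (b, v0))
      have h2 : ((f a).val : ZMod 2) = ((f b).val : ZMod 2) := by
        simp only [hφ] at h1
        exact add_right_cancel h1
      have h3 := f.valid he
      revert h3 h2
      generalize f a = x; generalize f b = y
      revert x y; decide
  · rintro (hG | hH)
    · exact tensor_connected_of_left hGc hHc hGe hHe hG
    · exact (tensorSwapIso G H).connected_iff.mpr
        (tensor_connected_of_left hHc hGc hHe hGe hH)
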